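/- For every semi-deterministic Büchi automaton A, the NCSB-MaxRank construction produces a Büchi automaton recognizing exactly Σ^ω \ L(A). -/
import Mathlib


attribute [local instance] Classical.propDecidable

universe u v

variable {A : Type u} {Q : Type v}

/-- `π` is an (infinite) trace of the transition function `δ` over the word `w`. -/
def IsTrace (δ : Q → A → Set Q) (w : ℕ → A) (π : ℕ → Q) : Prop :=
  ∀ i, π (i + 1) ∈ δ (π i) (w i)

/-- co-Büchi acceptance: only finitely many visits to `F`. -/
def FinAcc (F : Set Q) (π : ℕ → Q) : Prop := ∃ n, ∀ m ≥ n, π m ∉ F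

/-- Büchi acceptance (state-based): infinitely many visits to `F`. -/
def InfAcc (F : Set Q) (π : ℕ → Q) : Prop := ∀ n, ∃ m ≥ n, π m ∈ F

/-- Büchi acceptance with accepting states `F` and accepting transitions `δF`. -/
def BuchiAccT (F : Set Q) (δF : Set (Q × A × Q)) (w : ℕ → A) (π : ℕ → Q) : Prop :=
  ∀ n, ∃ m ≥ n, π m ∈ F ∨ (π m, w m, π (m + 1)) ∈ δF

/-- Successors of a set of states. -/
def stepSet (δ : Q → A → Set Q) (S : Set Q) (a : A) : Set Q := ⋃ p ∈ S, δ p a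

/-- The subset-construction sequence `ρ^B_α`. -/
def subsetSeq (δ : Q → A → Set Q) (w : ℕ → A) (B : Set Q) : ℕ → Set Q
  | 0 => B
  | i + 1 => stepSet δ (subsetSeq δ w B i) (w i)

/-- `Π_ρ`: the traces over `w` matching the sequence of sets `ρ` componentwise. -/
def TraceSet (δ : Q → A → Set Q) (w : ℕ → A) (ρ : ℕ → Set Q) : Set (ℕ → Q) :=
  {π | IsTrace δ w π ∧ ∀ i, π i ∈ ρ i}

/-- `Π_ρ` contains a (co-Büchi-)accepting trace. -/
def HasAccTrace (δ : Q → A → Set Q) (F : Set Q) (w : ℕ → A) (ρ : ℕ → Set Q) : Prop :=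
  ∃ π ∈ TraceSet δ w ρ, FinAcc F π

/-- `Π_ρ^∪` (the union of the trace sets of all suffixes) contains an accepting trace. -/
def HasAccTraceU (δ : Q → A → Set Q) (F : Set Q) (w : ℕ → A) (ρ : ℕ → Set Q) : Prop :=
  ∃ i, HasAccTrace δ F (fun n => w (n + i)) (fun n => ρ (n + i))

/-- Reachability in the automaton. -/
def Reaches (δ : Q → A → Set Q) : Q → Q → Prop :=
  Relation.ReflTransGen (fun p q => ∃ a, q ∈ δ p a)

/-- The maximal SCC containing `q`. -/
def scc (δ : Q → A → Set Q) (q : Q) : Set Q :=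
  {p | Reaches δ p q ∧ Reaches δ q p}

/-- Weak automaton: states of the same SCC agree on acceptance. -/
def IsWeak (δ : Q → A → Set Q) (F : Set Q) : Prop :=
  ∀ p q, Reaches δ p q → Reaches δ q p → (p ∈ F ↔ q ∈ F)

/-- Fair simulation on the co-BA `(Q, δ, _, F, ∅)`. -/
def FairSim (δ : Q → A → Set Q) (F : Set Q) (p q : Q) : Prop :=
  ∀ (w : ℕ → A) (π : ℕ → Q), π 0 = p → IsTrace δ w π → FinAcc F π →
    ∃ π', π' 0 = q ∧ IsTrace δ w π' ∧ FinAcc F π'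

/-- `R` is a direct-simulation relation on the BA `(Q, δ, _, F, ∅)`. -/
def IsDirectSim (δ : Q → A → Set Q) (F : Set Q) (R : Q → Q → Prop) : Prop :=
  ∀ p q, R p q → (p ∈ F → q ∈ F) ∧ ∀ a, ∀ p' ∈ δ p a, ∃ q' ∈ δ q a, R p' q'

/-- `p` is directly simulated by `q`. -/
def DirectSim (δ : Q → A → Set Q) (F : Set Q) (p q : Q) : Prop :=
  ∃ R, IsDirectSim δ F R ∧ R p q

/-- The relation `⊑`: fair simulation refined by the reachability conditions. -/
def SqSub (δ : Q → A → Set Q) (F : Set Q) (p q : Q) : Prop :=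
  FairSim δ F p q ∧ Reaches δ p q ∧ (¬ Reaches δ q p ∨ p = q)

/-- One step of the Miyano–Hayashi-style construction with adjustment function `θ`. -/
noncomputable def mhStep (δ : Q → A → Set Q) (F : Set Q) (θ : Set Q → Set Q)
    (m : Set Q × Set Q) (a : A) : Set Q × Set Q :=
  let S' := θ (stepSet δ m.1 a)
  (S', if m.2 = ∅ then S' \ F else (stepSet δ m.2 a ∩ S') \ F)

/-- The (unique) run of the deterministic automaton `MiHay_θ(A_c)` on `w`. -/
noncomputable def mhRun (δ : Q → A → Set Q) (F : Set Q) (θ : Set Q → Set Q)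
    (I : Set Q) (w : ℕ → A) : ℕ → Set Q × Set Q
  | 0 => (θ I, θ I \ F)
  | i + 1 => mhStep δ F θ (mhRun δ F θ I w i) (w i)

/-- `MiHay_θ(A_c)` accepts `w`: the `B`-component is empty infinitely often. -/
def MhAccepts (δ : Q → A → Set Q) (F : Set Q) (θ : Set Q → Set Q)
    (I : Set Q) (w : ℕ → A) : Prop :=
  ∀ n, ∃ m ≥ n, (mhRun δ F θ I w m).2 = (∅ : Set Q)

/-- `w ∈ L(A_c)` for the co-BA `A_c = (Q, δ, I, F, ∅)`. -/
def CoBuchiLang (δ : Q → A → Set Q) (I F : Set Q) (w : ℕ → A) : Prop :=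
  ∃ π, π 0 ∈ I ∧ IsTrace δ w π ∧ FinAcc F π

/-- `w ∈ L(A)` for the BA `A = (Q, δ, I, F, δF)`. -/
def BuchiLang (δ : Q → A → Set Q) (I F : Set Q) (δF : Set (Q × A × Q)) (w : ℕ → A) : Prop :=
  ∃ π, π 0 ∈ I ∧ IsTrace δ w π ∧ BuchiAccT F δF w π

/-- Macrostates `(N, C, S, B)` of the NCSB-MaxRank construction. -/
abbrev Macro (Q : Type v) := Set Q × Set Q × Set Q × Set Q

/-- The successor relation `δ'` of NCSB-MaxRank. -/
noncomputable def NcsbSucc (δ : Q → A → Set Q) (Q1 Q2 F : Set Q) (δF : Set (Q × A × Q))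
    (m : Macro Q) (a : A) (m' : Macro Q) : Prop :=
  (¬ ∃ p ∈ m.2.2.1, ∃ q ∈ δ p a, (p, a, q) ∈ δF) ∧
  (let N' := stepSet δ m.1 a ∩ Q1
   let S' := stepSet δ m.2.2.1 a
   let C' := ((stepSet δ m.1 a ∩ Q2) ∪ stepSet δ m.2.1 a) \ S'
   let B' := if m.2.2.2 = ∅ then C' else stepSet δ m.2.2.2 a ∩ C'
   m' = (N', C', S', B') ∨ (B' ∩ F = ∅ ∧ m' = (N', C' \ (S' ∪ B'), S' ∪ B', (∅ : Set Q))))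

/-- Well-formed macrostates of NCSB-MaxRank. -/
def NcsbState (Q1 Q2 F : Set Q) (m : Macro Q) : Prop :=
  m.1 ⊆ Q1 ∧ m.2.1 ⊆ Q2 ∧ m.2.2.1 ⊆ Q2 \ F ∧ m.2.2.2 ⊆ m.2.1

/-- `R` is a run of `NCSB-MaxRank(A)` on `w`. -/
noncomputable def NcsbRun (δ : Q → A → Set Q) (Q1 Q2 I F : Set Q) (δF : Set (Q × A × Q))
    (w : ℕ → A) (R : ℕ → Macro Q) : Prop :=
  R 0 = (Q1 ∩ I, Q2 ∩ I, (∅ : Set Q), Q2 ∩ I) ∧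
  (∀ i, NcsbState Q1 Q2 F (R i)) ∧
  ∀ i, NcsbSucc δ Q1 Q2 F δF (R i) (w i) (R (i + 1))

/-- A run of `NCSB-MaxRank(A)` is accepting: `B = ∅` infinitely often. -/
def NcsbAcc (R : ℕ → Macro Q) : Prop := ∀ n, ∃ m ≥ n, (R m).2.2.2 = (∅ : Set Q)

/- ===== Auxiliary development for the proof ===== -/

/-- Finite-path reachability along `w`, starting at time `i` in state `q`. -/
def PathReach (δ : Q → A → Set Q) (w : ℕ → A) (i : ℕ) (q : Q) : ℕ → Q → Prop
  | 0, p => p = q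
  | k + 1, p => ∃ r, PathReach δ w i q k r ∧ p ∈ δ r (w (i + k))

/-- `q` is safe at time `i`: no accepting event is ever reachable from it along `w`. -/
def Safe (δ : Q → A → Set Q) (F : Set Q) (δF : Set (Q × A × Q)) (w : ℕ → A)
    (i : ℕ) (q : Q) : Prop :=
  ∀ k p, PathReach δ w i q k p →
    p ∉ F ∧ ∀ p' ∈ δ p (w (i + k)), (p, w (i + k), p') ∉ δF

lemma safe_notF {δ : Q → A → Set Q} {F : Set Q} {δF : Set (Q × A × Q)} {w : ℕ → A}
    {i : ℕ} {q : Q} (h : Safe δ F δF w i q) : q ∉ F :=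
  (h 0 q rfl).1

lemma safe_notδF {δ : Q → A → Set Q} {F : Set Q} {δF : Set (Q × A × Q)} {w : ℕ → A}
    {i : ℕ} {q : Q} (h : Safe δ F δF w i q) :
    ∀ p' ∈ δ q (w i), (q, w i, p') ∉ δF :=
  (h 0 q rfl).2

lemma pathReach_shift {δ : Q → A → Set Q} {w : ℕ → A} {i : ℕ} {q p : Q}
    (hp : p ∈ δ q (w i)) :
    ∀ k r, PathReach δ w (i + 1) p k r → PathReach δ w i q (k + 1) r := by
  intro k
  induction k with
  | zero => intro r hr; subst hr; exact ⟨q, rfl, hp⟩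
  | succ k ih =>
    rintro r ⟨s, hs, hr⟩
    exact ⟨s, ih s hs, by rw [show i + (k + 1) = i + 1 + k by omega]; exact hr⟩

lemma safe_step {δ : Q → A → Set Q} {F : Set Q} {δF : Set (Q × A × Q)} {w : ℕ → A}
    {i : ℕ} {q : Q} (h : Safe δ F δF w i q) {p : Q} (hp : p ∈ δ q (w i)) :
    Safe δ F δF w (i + 1) p := by
  intro k r hr
  have hh := h (k + 1) r (pathReach_shift hp k r hr)
  rw [show i + 1 + k = i + (k + 1) by omega]
  exact hh

lemma pathReach_trans {δ : Q → A → Set Q} {w : ℕ → A} {i : ℕ} {q : Q} {k : ℕ} {p : Q}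
    (h1 : PathReach δ w i q k p) :
    ∀ k' p', PathReach δ w (i + k) p k' p' → PathReach δ w i q (k + k') p' := by
  intro k'
  induction k' with
  | zero => intro p' h; subst h; exact h1
  | succ k' ih =>
    rintro p' ⟨r, hr, hp'⟩
    refine ⟨r, ih r hr, ?_⟩
    show p' ∈ δ r (w (i + (k + k')))
    rw [← Nat.add_assoc]
    exact hp'

lemma pathReach_prefix {δ : Q → A → Set Q} {w : ℕ → A} {i : ℕ} {q : Q} :
    ∀ k p, PathReach δ w i q k p → ∀ k' ≤ k, ∃ r, PathReach δ w i q k' r := by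
  intro k
  induction k with
  | zero =>
    intro p hp k' hk'
    have : k' = 0 := Nat.le_zero.mp hk'
    subst this; exact ⟨q, rfl⟩
  | succ k ih =>
    intro p hp k' hk'
    by_cases h : k' ≤ k
    · obtain ⟨r, hr, -⟩ := hp
      exact ih r hr k' h
    · have : k' = k + 1 := by omega
      subst this; exact ⟨p, hp⟩

lemma pathReach_Q2 {δ : Q → A → Set Q} {Q2 : Set Q}
    (hclosed : ∀ q ∈ Q2, ∀ a, δ q a ⊆ Q2) {w : ℕ → A} {i : ℕ} {q : Q} (hq : q ∈ Q2) :
    ∀ k p, PathReach δ w i q k p → p ∈ Q2 := by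
  intro k
  induction k with
  | zero => intro p hp; subst hp; exact hq
  | succ k ih => rintro p ⟨r, hr, hp⟩; exact hclosed r (ih r hr) _ hp

lemma pathReach_unique {δ : Q → A → Set Q} {Q2 : Set Q}
    (hclosed : ∀ q ∈ Q2, ∀ a, δ q a ⊆ Q2)
    (hdet : ∀ q ∈ Q2, ∀ a, (δ q a).Subsingleton)
    {w : ℕ → A} {i : ℕ} {q : Q} (hq : q ∈ Q2) :
    ∀ k p p', PathReach δ w i q k p → PathReach δ w i q k p' → p = p' := by
  intro k
  induction k with
  | zero => intro p p' hp hp'; subst hp; subst hp'; rfl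
  | succ k ih =>
    rintro p p' ⟨r, hr, hp⟩ ⟨r', hr', hp'⟩
    have := ih r r' hr hr'
    subst this
    exact hdet r (pathReach_Q2 hclosed hq k r hr) _ hp hp'

lemma mem_stepSet {δ : Q → A → Set Q} {X : Set Q} {a : A} {p : Q} :
    p ∈ stepSet δ X a ↔ ∃ r ∈ X, p ∈ δ r a := by
  simp [stepSet]

lemma stepSet_mono {δ : Q → A → Set Q} {X Y : Set Q} (h : X ⊆ Y) (a : A) :
    stepSet δ X a ⊆ stepSet δ Y a := by
  intro p hp
  obtain ⟨r, hr, hpr⟩ := mem_stepSet.mp hp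
  exact mem_stepSet.mpr ⟨r, h hr, hpr⟩

lemma stepSet_sub_Q2 {δ : Q → A → Set Q} {Q2 : Set Q}
    (hclosed : ∀ q ∈ Q2, ∀ a, δ q a ⊆ Q2) {X : Set Q} (h : X ⊆ Q2) (a : A) :
    stepSet δ X a ⊆ Q2 := by
  intro p hp
  obtain ⟨r, hr, hpr⟩ := mem_stepSet.mp hp
  exact hclosed r (h hr) _ hpr

lemma subsetSeq_path {δ : Q → A → Set Q} {w : ℕ → A} {I : Set Q} :
    ∀ n q, q ∈ subsetSeq δ w I n →
      ∃ π : ℕ → Q, π 0 ∈ I ∧ (∀ j < n, π (j + 1) ∈ δ (π j) (w j)) ∧ π n = q := by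
  intro n
  induction n with
  | zero =>
    intro q hq
    exact ⟨fun _ => q, hq, fun j hj => absurd hj (Nat.not_lt_zero j), rfl⟩
  | succ n ih =>
    intro q hq
    obtain ⟨p, hp, hqp⟩ := mem_stepSet.mp hq
    obtain ⟨π, hI, htr, hend⟩ := ih p hp
    refine ⟨fun m => if m = n + 1 then q else π m, ?_, ?_, ?_⟩
    · show (if (0 : ℕ) = n + 1 then q else π 0) ∈ I
      rw [if_neg (by omega : (0 : ℕ) ≠ n + 1)]; exact hI
    · intro j hj
      show (if j + 1 = n + 1 then q else π (j + 1)) ∈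
        δ (if j = n + 1 then q else π j) (w j)
      by_cases hjn : j + 1 = n + 1
      · have hj' : j = n := by omega
        subst hj'
        rw [if_pos rfl, if_neg (by omega : j ≠ j + 1), hend]
        exact hqp
      · rw [if_neg hjn, if_neg (by omega : j ≠ n + 1)]
        exact htr j (by omega)
    · show (if n + 1 = n + 1 then q else π (n + 1)) = q
      rw [if_pos rfl]

lemma ev_safe {δ : Q → A → Set Q} {Q2 I F : Set Q} {δF : Set (Q × A × Q)} {w : ℕ → A}
    (hclosed : ∀ q ∈ Q2, ∀ a, δ q a ⊆ Q2)
    (hdet : ∀ q ∈ Q2, ∀ a, (δ q a).Subsingleton)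
    (hnL : ¬ BuchiLang δ I F δF w) {n : ℕ} {q : Q}
    (hq2 : q ∈ Q2) (hqr : q ∈ subsetSeq δ w I n) :
    ∃ k, ∀ k' p, k ≤ k' → PathReach δ w n q k' p → Safe δ F δF w (n + k') p := by
  by_contra hc
  push_neg at hc
  -- arbitrary-late events along the (unique) future of q
  have hEv : ∀ b, ∃ j p, b ≤ j ∧ PathReach δ w n q j p ∧
      (p ∈ F ∨ ∃ p' ∈ δ p (w (n + j)), (p, w (n + j), p') ∈ δF) := by
    intro b
    obtain ⟨k', p, hb, hpr, hns⟩ := hc b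
    rw [Safe] at hns
    push_neg at hns
    obtain ⟨k'', p'', hpr'', hbad⟩ := hns
    refine ⟨k' + k'', p'', le_trans hb (Nat.le_add_right _ _),
      pathReach_trans hpr k'' p'' hpr'', ?_⟩
    rw [show n + (k' + k'') = n + k' + k'' by omega]
    by_cases hFm : p'' ∈ F
    · exact Or.inl hFm
    · obtain ⟨p', hp', hδ'⟩ := hbad hFm
      exact Or.inr ⟨p', hp', hδ'⟩
  have htot : ∀ k, ∃ p, PathReach δ w n q k p := by
    intro k
    obtain ⟨j, p, hkj, hpr, -⟩ := hEv k
    exact pathReach_prefix j p hpr k hkj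
  choose ρ hρ using htot
  have hρ0 : ρ 0 = q := hρ 0
  have hρtr : ∀ k, ρ (k + 1) ∈ δ (ρ k) (w (n + k)) := by
    intro k
    obtain ⟨r, hr, hmem⟩ := hρ (k + 1)
    rwa [pathReach_unique hclosed hdet hq2 k r (ρ k) hr (hρ k)] at hmem
  have hρEv : ∀ b, ∃ j, b ≤ j ∧ (ρ j ∈ F ∨ (ρ j, w (n + j), ρ (j + 1)) ∈ δF) := by
    intro b
    obtain ⟨j, p, hbj, hpr, hbad⟩ := hEv b
    have hpj : p = ρ j := pathReach_unique hclosed hdet hq2 j p (ρ j) hpr (hρ j)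
    rcases hbad with hFm | ⟨p', hp', hδ'⟩
    · refine ⟨j, hbj, Or.inl ?_⟩
      rw [← hpj]; exact hFm
    · have hmem : ρ (j + 1) ∈ δ p (w (n + j)) := by rw [hpj]; exact hρtr j
      have hp'' : p' = ρ (j + 1) :=
        hdet p (pathReach_Q2 hclosed hq2 j p hpr) _ hp' hmem
      refine ⟨j, hbj, Or.inr ?_⟩
      rw [← hpj, ← hp'']; exact hδ'
  -- compose with a prefix from I
  obtain ⟨π₀, hI, hpfx, hend⟩ := subsetSeq_path n q hqr
  set π : ℕ → Q := fun m => if m < n then π₀ m else ρ (m - n) with hπ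
  have hπge : ∀ m, n ≤ m → π m = ρ (m - n) := by
    intro m hm; simp only [hπ]; rw [if_neg (by omega)]
  have hπlt : ∀ m, m ≤ n → π m = π₀ m := by
    intro m hm
    by_cases h : m < n
    · simp only [hπ]; rw [if_pos h]
    · have hmn : m = n := by omega
      subst hmn
      simp only [hπ]; rw [if_neg (by omega)]
      simp only [Nat.sub_self, hρ0, hend]
  refine hnL ⟨π, ?_, ?_, ?_⟩
  · rw [hπlt 0 (Nat.zero_le n)]; exact hI
  · intro m
    by_cases hm : m < n
    · rw [hπlt m (by omega), hπlt (m + 1) (by omega)]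
      exact hpfx m hm
    · rw [hπge m (by omega), hπge (m + 1) (by omega)]
      rw [show m + 1 - n = (m - n) + 1 by omega]
      have := hρtr (m - n)
      rwa [show n + (m - n) = m by omega] at this
  · intro b
    obtain ⟨j, hbj, hev⟩ := hρEv b
    refine ⟨n + j, by omega, ?_⟩
    rw [hπge (n + j) (by omega), hπge (n + j + 1) (by omega)]
    rw [show n + j - n = j by omega, show n + j + 1 - n = j + 1 by omega]
    exact hev

/-- The `N`-component of the NCSB successor. -/
def suN (δ : Q → A → Set Q) (Q1 : Set Q) (m : Macro Q) (a : A) : Set Q :=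
  stepSet δ m.1 a ∩ Q1

/-- The `S`-component of the NCSB successor (type 1). -/
def suS (δ : Q → A → Set Q) (m : Macro Q) (a : A) : Set Q :=
  stepSet δ m.2.2.1 a

/-- The `C`-component of the NCSB successor (type 1). -/
def suC (δ : Q → A → Set Q) (Q2 : Set Q) (m : Macro Q) (a : A) : Set Q :=
  ((stepSet δ m.1 a ∩ Q2) ∪ stepSet δ m.2.1 a) \ suS δ m a

/-- The `B`-component of the NCSB successor (type 1). -/
noncomputable def suB (δ : Q → A → Set Q) (Q2 : Set Q) (m : Macro Q) (a : A) : Set Q :=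
  if m.2.2.2 = ∅ then suC δ Q2 m a else stepSet δ m.2.2.2 a ∩ suC δ Q2 m a

lemma ncsbSucc_iff {δ : Q → A → Set Q} {Q1 Q2 F : Set Q} {δF : Set (Q × A × Q)}
    {m : Macro Q} {a : A} {m' : Macro Q} :
    NcsbSucc δ Q1 Q2 F δF m a m' ↔
      (¬ ∃ p ∈ m.2.2.1, ∃ q ∈ δ p a, (p, a, q) ∈ δF) ∧
      (m' = (suN δ Q1 m a, suC δ Q2 m a, suS δ m a, suB δ Q2 m a) ∨
        (suB δ Q2 m a ∩ F = ∅ ∧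
         m' = (suN δ Q1 m a, suC δ Q2 m a \ (suS δ m a ∪ suB δ Q2 m a),
               suS δ m a ∪ suB δ Q2 m a, (∅ : Set Q)))) :=
  Iff.rfl

lemma suB_sub_suC {δ : Q → A → Set Q} {Q2 : Set Q} {m : Macro Q} {a : A} :
    suB δ Q2 m a ⊆ suC δ Q2 m a := by
  rw [suB]
  by_cases h : m.2.2.2 = (∅ : Set Q)
  · rw [if_pos h]
  · rw [if_neg h]; exact Set.inter_subset_right

/-- One step of the canonical (safety-aware) NCSB run. -/
noncomputable def ncsbNext (δ : Q → A → Set Q) (Q1 Q2 F : Set Q) (δF : Set (Q × A × Q))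
    (w : ℕ → A) (i : ℕ) (m : Macro Q) : Macro Q :=
  if ∀ q ∈ suB δ Q2 m (w i), Safe δ F δF w (i + 1) q then
    (suN δ Q1 m (w i), suC δ Q2 m (w i) \ (suS δ m (w i) ∪ suB δ Q2 m (w i)),
     suS δ m (w i) ∪ suB δ Q2 m (w i), (∅ : Set Q))
  else (suN δ Q1 m (w i), suC δ Q2 m (w i), suS δ m (w i), suB δ Q2 m (w i))

/-- The canonical NCSB run. -/
noncomputable def myRun (δ : Q → A → Set Q) (Q1 Q2 I F : Set Q) (δF : Set (Q × A × Q))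
    (w : ℕ → A) : ℕ → Macro Q
  | 0 => (Q1 ∩ I, Q2 ∩ I, (∅ : Set Q), Q2 ∩ I)
  | i + 1 => ncsbNext δ Q1 Q2 F δF w i (myRun δ Q1 Q2 I F δF w i)

lemma myRun_succ (δ : Q → A → Set Q) (Q1 Q2 I F : Set Q) (δF : Set (Q × A × Q))
    (w : ℕ → A) (i : ℕ) :
    myRun δ Q1 Q2 I F δF w (i + 1) =
      ncsbNext δ Q1 Q2 F δF w i (myRun δ Q1 Q2 I F δF w i) := rfl

lemma myRun_inv (δ : Q → A → Set Q) (Q1 Q2 I F : Set Q) (δF : Set (Q × A × Q))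
    (w : ℕ → A) (hclosed : ∀ q ∈ Q2, ∀ a, δ q a ⊆ Q2) (i : ℕ) :
    (myRun δ Q1 Q2 I F δF w i).1 ⊆ Q1 ∧
    (myRun δ Q1 Q2 I F δF w i).2.1 ⊆ Q2 ∧
    (myRun δ Q1 Q2 I F δF w i).2.2.1 ⊆ Q2 ∧
    (∀ q ∈ (myRun δ Q1 Q2 I F δF w i).2.2.1, Safe δ F δF w i q) ∧
    (myRun δ Q1 Q2 I F δF w i).2.2.2 ⊆ (myRun δ Q1 Q2 I F δF w i).2.1 ∧
    ((myRun δ Q1 Q2 I F δF w i).1 ∪ (myRun δ Q1 Q2 I F δF w i).2.1 ∪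
      (myRun δ Q1 Q2 I F δF w i).2.2.1 ⊆ subsetSeq δ w I i) := by
  induction i with
  | zero =>
    refine ⟨Set.inter_subset_left, Set.inter_subset_left, ?_, ?_, ?_, ?_⟩
    · intro q hq; exact absurd hq (Set.notMem_empty q)
    · intro q hq; exact absurd hq (Set.notMem_empty q)
    · exact subset_rfl
    · intro q hq
      rcases hq with (h | h) | h
      · exact h.2
      · exact h.2
      · exact absurd h (Set.notMem_empty q)
  | succ i ih =>
    obtain ⟨ihN, ihC, ihS, ihSafe, ihB, ihss⟩ := ih
    set m := myRun δ Q1 Q2 I F δF w i with hm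
    have hsC : suC δ Q2 m (w i) ⊆ Q2 := by
      intro p hp
      rcases hp.1 with h | h
      · exact h.2
      · exact stepSet_sub_Q2 hclosed ihC (w i) h
    have hsS : suS δ m (w i) ⊆ Q2 := stepSet_sub_Q2 hclosed ihS (w i)
    have hsSafe : ∀ q ∈ suS δ m (w i), Safe δ F δF w (i + 1) q := by
      intro q hq
      obtain ⟨r, hr, hqr⟩ := mem_stepSet.mp hq
      exact safe_step (ihSafe r hr) hqr
    have hsB : suB δ Q2 m (w i) ⊆ suC δ Q2 m (w i) := suB_sub_suC
    have hss' : suN δ Q1 m (w i) ∪ suC δ Q2 m (w i) ∪ suS δ m (w i) ∪ suB δ Q2 m (w i) ⊆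
        subsetSeq δ w I (i + 1) := by
      have hstep : stepSet δ (m.1 ∪ m.2.1 ∪ m.2.2.1) (w i) ⊆ subsetSeq δ w I (i + 1) :=
        stepSet_mono ihss (w i)
      intro p hp
      rcases hp with ((h | h) | h) | h
      · exact hstep (stepSet_mono (fun x hx => Or.inl (Or.inl hx)) (w i) h.1)
      · rcases h.1 with h' | h'
        · exact hstep (stepSet_mono (fun x hx => Or.inl (Or.inl hx)) (w i) h'.1)
        · exact hstep (stepSet_mono (fun x hx => Or.inl (Or.inr hx)) (w i) h')
      · exact hstep (stepSet_mono (fun x hx => Or.inr hx) (w i) h)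
      · have h' := hsB h
        rcases h'.1 with h'' | h''
        · exact hstep (stepSet_mono (fun x hx => Or.inl (Or.inl hx)) (w i) h''.1)
        · exact hstep (stepSet_mono (fun x hx => Or.inl (Or.inr hx)) (w i) h'')
    rw [myRun_succ, ncsbNext, ← hm]
    by_cases hc : ∀ q ∈ suB δ Q2 m (w i), Safe δ F δF w (i + 1) q
    · rw [if_pos hc]
      refine ⟨Set.inter_subset_right, ?_, ?_, ?_, ?_, ?_⟩
      · exact fun p hp => hsC hp.1
      · intro p hp
        rcases hp with h | h
        · exact hsS h
        · exact hsC (hsB h)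
      · intro q hq
        rcases hq with h | h
        · exact hsSafe q h
        · exact hc q h
      · intro q hq; exact absurd hq (Set.notMem_empty q)
      · intro p hp
        rcases hp with (h | h) | h
        · exact hss' (Or.inl (Or.inl (Or.inl h)))
        · exact hss' (Or.inl (Or.inl (Or.inr h.1)))
        · rcases h with h | h
          · exact hss' (Or.inl (Or.inr h))
          · exact hss' (Or.inr h)
    · rw [if_neg hc]
      refine ⟨Set.inter_subset_right, hsC, hsS, hsSafe, hsB, ?_⟩
      intro p hp
      rcases hp with (h | h) | h
      · exact hss' (Or.inl (Or.inl (Or.inl h)))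
      · exact hss' (Or.inl (Or.inl (Or.inr h)))
      · exact hss' (Or.inl (Or.inr h))

lemma suB_empty {δ : Q → A → Set Q} {Q2 : Set Q} {m : Macro Q} {a : A}
    (h : m.2.2.2 = ∅) : suB δ Q2 m a = suC δ Q2 m a := if_pos h

lemma suB_ne {δ : Q → A → Set Q} {Q2 : Set Q} {m : Macro Q} {a : A}
    (h : m.2.2.2 ≠ ∅) : suB δ Q2 m a = stepSet δ m.2.2.2 a ∩ suC δ Q2 m a := if_neg h

lemma ncsbNext_pos {δ : Q → A → Set Q} {Q1 Q2 F : Set Q} {δF : Set (Q × A × Q)}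
    {w : ℕ → A} {i : ℕ} {m : Macro Q}
    (hc : ∀ q ∈ suB δ Q2 m (w i), Safe δ F δF w (i + 1) q) :
    ncsbNext δ Q1 Q2 F δF w i m =
      (suN δ Q1 m (w i), suC δ Q2 m (w i) \ (suS δ m (w i) ∪ suB δ Q2 m (w i)),
       suS δ m (w i) ∪ suB δ Q2 m (w i), (∅ : Set Q)) := if_pos hc

lemma ncsbNext_neg {δ : Q → A → Set Q} {Q1 Q2 F : Set Q} {δF : Set (Q × A × Q)}
    {w : ℕ → A} {i : ℕ} {m : Macro Q}
    (hc : ¬ ∀ q ∈ suB δ Q2 m (w i), Safe δ F δF w (i + 1) q) :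
    ncsbNext δ Q1 Q2 F δF w i m =
      (suN δ Q1 m (w i), suC δ Q2 m (w i), suS δ m (w i), suB δ Q2 m (w i)) := if_neg hc

/-- Correctness of NCSB-MaxRank: for every SDBA `A`, the construction recognizes
exactly `Σ^ω \ L(A)`. -/
theorem ncsb_maxrank_correct [Finite Q]
    (δ : Q → A → Set Q) (Q1 Q2 I F : Set Q) (δF : Set (Q × A × Q))
    (hpart : Q1 = Q2ᶜ)
    (hclosed : ∀ q ∈ Q2, ∀ a, δ q a ⊆ Q2)
    (hdet : ∀ q ∈ Q2, ∀ a, (δ q a).Subsingleton)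
    (hF : F ⊆ Q2)
    (hδF : ∀ p a q, (p, a, q) ∈ δF → q ∈ δ p a ∧ q ∈ Q2) :
    ∀ w : ℕ → A,
      (∃ R : ℕ → Macro Q, NcsbRun δ Q1 Q2 I F δF w R ∧ NcsbAcc R) ↔
        ¬ BuchiLang δ I F δF w := by
  intro w
  constructor
  · -- soundness
    rintro ⟨R, ⟨hR0, hRst, hRsucc⟩, hacc⟩ ⟨π, hπI, hπtr, hπacc⟩
    have hQ12 : ∀ p : Q, p ∈ Q1 ∨ p ∈ Q2 := by
      intro p
      by_cases h : p ∈ Q2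
      · exact Or.inr h
      · exact Or.inl (by rw [hpart]; exact h)
    have hdisjQ : ∀ p, p ∈ Q2 → p ∉ Q1 := by
      intro p hp
      rw [hpart]
      exact fun hc => hc hp
    have cover : ∀ i, π i ∈ (R i).1 ∨ π i ∈ (R i).2.1 ∨ π i ∈ (R i).2.2.1 := by
      intro i
      induction i with
      | zero =>
        rw [hR0]
        rcases hQ12 (π 0) with h | h
        · exact Or.inl ⟨h, hπI⟩
        · exact Or.inr (Or.inl ⟨h, hπI⟩)
      | succ i ih =>
        obtain ⟨-, hstep⟩ := ncsbSucc_iff.mp (hRsucc i)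
        have hforms : π (i + 1) ∈ suN δ Q1 (R i) (w i) ∨
            π (i + 1) ∈ suC δ Q2 (R i) (w i) ∨ π (i + 1) ∈ suS δ (R i) (w i) := by
          rcases ih with h | h | h
          · have hm : π (i + 1) ∈ stepSet δ (R i).1 (w i) :=
              mem_stepSet.mpr ⟨_, h, hπtr i⟩
            rcases hQ12 (π (i + 1)) with h1 | h2
            · exact Or.inl ⟨hm, h1⟩
            · by_cases hs : π (i + 1) ∈ suS δ (R i) (w i)
              · exact Or.inr (Or.inr hs)
              · exact Or.inr (Or.inl ⟨Or.inl ⟨hm, h2⟩, hs⟩)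
          · have hm : π (i + 1) ∈ stepSet δ (R i).2.1 (w i) :=
              mem_stepSet.mpr ⟨_, h, hπtr i⟩
            by_cases hs : π (i + 1) ∈ suS δ (R i) (w i)
            · exact Or.inr (Or.inr hs)
            · exact Or.inr (Or.inl ⟨Or.inr hm, hs⟩)
          · exact Or.inr (Or.inr (mem_stepSet.mpr ⟨_, h, hπtr i⟩))
        rcases hstep with h | ⟨-, h⟩
        · rw [h]
          exact hforms
        · rw [h]
          rcases hforms with h1 | h1 | h1
          · exact Or.inl h1
          · by_cases hs : π (i + 1) ∈ suS δ (R i) (w i) ∪ suB δ Q2 (R i) (w i)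
            · exact Or.inr (Or.inr hs)
            · exact Or.inr (Or.inl ⟨h1, hs⟩)
          · exact Or.inr (Or.inr (Or.inl h1))
    have stayS : ∀ i, π i ∈ (R i).2.2.1 → π (i + 1) ∈ (R (i + 1)).2.2.1 := by
      intro i hi
      obtain ⟨-, hstep⟩ := ncsbSucc_iff.mp (hRsucc i)
      have hm : π (i + 1) ∈ suS δ (R i) (w i) := mem_stepSet.mpr ⟨_, hi, hπtr i⟩
      rcases hstep with h | ⟨-, h⟩
      · rw [h]; exact hm
      · rw [h]; exact Or.inl hm
    have neverS : ∀ i, π i ∉ (R i).2.2.1 := by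
      intro i hi
      have hstay : ∀ j, π (i + j) ∈ (R (i + j)).2.2.1 := by
        intro j
        induction j with
        | zero => exact hi
        | succ j ih => exact stayS (i + j) ih
      obtain ⟨m, hm, hev⟩ := hπacc i
      have hmS : π m ∈ (R m).2.2.1 := by
        have := hstay (m - i)
        rwa [show i + (m - i) = m by omega] at this
      rcases hev with hFm | hδ
      · exact ((hRst m).2.2.1 hmS).2 hFm
      · exact (ncsbSucc_iff.mp (hRsucc m)).1 ⟨π m, hmS, π (m + 1), hπtr m, hδ⟩
    obtain ⟨m0, -, hev0⟩ := hπacc 0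
    have hn0 : ∃ n0, π n0 ∈ Q2 := by
      rcases hev0 with h | h
      · exact ⟨m0, hF h⟩
      · exact ⟨m0 + 1, (hδF _ _ _ h).2⟩
    obtain ⟨n0, hn0⟩ := hn0
    have hQ2m : ∀ m, n0 ≤ m → π m ∈ Q2 := by
      have haux : ∀ j, π (n0 + j) ∈ Q2 := by
        intro j
        induction j with
        | zero => exact hn0
        | succ j ih => exact hclosed _ ih _ (hπtr (n0 + j))
      intro m hm
      have := haux (m - n0)
      rwa [show n0 + (m - n0) = m by omega] at this
    have hinC : ∀ m, n0 ≤ m → π m ∈ (R m).2.1 := by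
      intro m hm
      rcases cover m with h | h | h
      · exact absurd ((hRst m).1 h) (hdisjQ _ (hQ2m m hm))
      · exact h
      · exact absurd h (neverS m)
    obtain ⟨t, ht, hBt⟩ := hacc n0
    have hinB : ∀ j, π (t + 1 + j) ∈ (R (t + 1 + j)).2.2.2 := by
      intro j
      induction j with
      | zero =>
        show π (t + 1) ∈ (R (t + 1)).2.2.2
        obtain ⟨-, hstep⟩ := ncsbSucc_iff.mp (hRsucc t)
        have hπC : π (t + 1) ∈ (R (t + 1)).2.1 := hinC (t + 1) (by omega)
        rcases hstep with h | ⟨-, h⟩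
        · rw [h] at hπC ⊢
          show π (t + 1) ∈ suB δ Q2 (R t) (w t)
          rw [suB_empty hBt]
          exact hπC
        · exfalso
          rw [h] at hπC
          have h2 : π (t + 1) ∉ suS δ (R t) (w t) ∪ suB δ Q2 (R t) (w t) := hπC.2
          apply h2
          right
          rw [suB_empty hBt]
          exact hπC.1
      | succ j ih =>
        show π ((t + 1 + j) + 1) ∈ (R ((t + 1 + j) + 1)).2.2.2
        have hBne : (R (t + 1 + j)).2.2.2 ≠ ∅ := by
          intro h
          rw [h] at ih
          exact Set.notMem_empty _ ih
        obtain ⟨-, hstep⟩ := ncsbSucc_iff.mp (hRsucc (t + 1 + j))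
        have hπC : π ((t + 1 + j) + 1) ∈ (R ((t + 1 + j) + 1)).2.1 :=
          hinC ((t + 1 + j) + 1) (by omega)
        have hstepB : π ((t + 1 + j) + 1) ∈ stepSet δ (R (t + 1 + j)).2.2.2 (w (t + 1 + j)) :=
          mem_stepSet.mpr ⟨_, ih, hπtr (t + 1 + j)⟩
        rcases hstep with h | ⟨-, h⟩
        · rw [h] at hπC ⊢
          show π ((t + 1 + j) + 1) ∈ suB δ Q2 (R (t + 1 + j)) (w (t + 1 + j))
          rw [suB_ne hBne]
          exact ⟨hstepB, hπC⟩
        · exfalso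
          rw [h] at hπC
          have h2 : π ((t + 1 + j) + 1) ∉
              suS δ (R (t + 1 + j)) (w (t + 1 + j)) ∪
                suB δ Q2 (R (t + 1 + j)) (w (t + 1 + j)) := hπC.2
          apply h2
          right
          rw [suB_ne hBne]
          exact ⟨hstepB, hπC.1⟩
    obtain ⟨m, hm, hBm⟩ := hacc (t + 1)
    have hfin := hinB (m - (t + 1))
    rw [show t + 1 + (m - (t + 1)) = m by omega, hBm] at hfin
    exact Set.notMem_empty _ hfin
  · -- completeness
    intro hnL
    refine ⟨myRun δ Q1 Q2 I F δF w, ⟨rfl, ?_, ?_⟩, ?_⟩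
    · intro i
      obtain ⟨hN, hC, hS, hSafe, hB, -⟩ := myRun_inv δ Q1 Q2 I F δF w hclosed i
      exact ⟨hN, hC, fun p hp => ⟨hS hp, safe_notF (hSafe p hp)⟩, hB⟩
    · intro i
      rw [ncsbSucc_iff]
      obtain ⟨-, -, -, hSafe, -, -⟩ := myRun_inv δ Q1 Q2 I F δF w hclosed i
      constructor
      · rintro ⟨p, hp, q', hq', hδ'⟩
        exact safe_notδF (hSafe p hp) q' hq' hδ'
      · rw [myRun_succ]
        by_cases hc : ∀ q ∈ suB δ Q2 (myRun δ Q1 Q2 I F δF w i) (w i),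
            Safe δ F δF w (i + 1) q
        · rw [ncsbNext_pos hc]
          right
          refine ⟨?_, rfl⟩
          apply Set.eq_empty_iff_forall_notMem.mpr
          intro p hp
          exact safe_notF (hc p hp.1) hp.2
        · rw [ncsbNext_neg hc]
          left
          rfl
    · -- acceptance
      intro n
      by_cases h0 : (myRun δ Q1 Q2 I F δF w n).2.2.2 = ∅
      · exact ⟨n, le_refl n, h0⟩
      obtain ⟨-, hCQ2, -, -, hBC, hss⟩ := myRun_inv δ Q1 Q2 I F δF w hclosed n
      have hBQ2 : ∀ q ∈ (myRun δ Q1 Q2 I F δF w n).2.2.2, q ∈ Q2 :=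
        fun q hq => hCQ2 (hBC hq)
      have hBss : ∀ q ∈ (myRun δ Q1 Q2 I F δF w n).2.2.2, q ∈ subsetSeq δ w I n :=
        fun q hq => hss (Or.inl (Or.inr (hBC hq)))
      have hexk : ∀ q : Q, ∃ k, q ∈ (myRun δ Q1 Q2 I F δF w n).2.2.2 →
          ∀ k' p, k ≤ k' → PathReach δ w n q k' p → Safe δ F δF w (n + k') p := by
        intro q
        by_cases hq : q ∈ (myRun δ Q1 Q2 I F δF w n).2.2.2
        · obtain ⟨k, hk⟩ := ev_safe hclosed hdet hnL (hBQ2 q hq) (hBss q hq)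
          exact ⟨k, fun _ => hk⟩
        · exact ⟨0, fun h => absurd h hq⟩
      choose f hf using hexk
      have hFin : Fintype Q := Fintype.ofFinite Q
      set k := (Finset.univ : Finset Q).sup f with hkdef
      have hfk : ∀ q : Q, f q ≤ k := fun q => Finset.le_sup (Finset.mem_univ q)
      by_contra hne0
      push_neg at hne0
      have hne : ∀ m, n ≤ m → (myRun δ Q1 Q2 I F δF w m).2.2.2 ≠ ∅ := by
        intro m hm
        have := hne0 m hm
        intro hc
        rw [hc] at this
        exact Set.not_nonempty_empty this
      have hdesc : ∀ j, ∀ p ∈ (myRun δ Q1 Q2 I F δF w (n + j)).2.2.2,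
          ∃ q ∈ (myRun δ Q1 Q2 I F δF w n).2.2.2, PathReach δ w n q j p := by
        intro j
        induction j with
        | zero => intro p hp; exact ⟨p, hp, rfl⟩
        | succ j ih =>
          intro p hp
          have hBnej : (myRun δ Q1 Q2 I F δF w (n + j)).2.2.2 ≠ ∅ := hne (n + j) (by omega)
          by_cases hc : ∀ q ∈ suB δ Q2 (myRun δ Q1 Q2 I F δF w (n + j)) (w (n + j)),
              Safe δ F δF w (n + j + 1) q
          · exfalso
            apply hne (n + j + 1) (by omega)
            rw [myRun_succ, ncsbNext_pos hc]
          · have hp0 : p ∈ (myRun δ Q1 Q2 I F δF w ((n + j) + 1)).2.2.2 := hp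
            rw [myRun_succ, ncsbNext_neg hc] at hp0
            have hp' : p ∈ suB δ Q2 (myRun δ Q1 Q2 I F δF w (n + j)) (w (n + j)) := hp0
            rw [suB_ne hBnej] at hp'
            obtain ⟨r, hr, hpr⟩ := mem_stepSet.mp hp'.1
            obtain ⟨q, hqB, hq⟩ := ih r hr
            exact ⟨q, hqB, r, hq, hpr⟩
      have hBneK : (myRun δ Q1 Q2 I F δF w (n + k)).2.2.2 ≠ ∅ := hne (n + k) (by omega)
      have hcond : ∀ q ∈ suB δ Q2 (myRun δ Q1 Q2 I F δF w (n + k)) (w (n + k)),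
          Safe δ F δF w (n + k + 1) q := by
        intro p hp
        rw [suB_ne hBneK] at hp
        obtain ⟨r, hr, hpr⟩ := mem_stepSet.mp hp.1
        obtain ⟨q, hqB, hq⟩ := hdesc k r hr
        have hpath : PathReach δ w n q (k + 1) p := ⟨r, hq, hpr⟩
        have hsafe := hf q hqB (k + 1) p (le_trans (hfk q) (by omega)) hpath
        rwa [show n + (k + 1) = n + k + 1 by omega] at hsafe
      exact hne (n + k + 1) (by omega) (by rw [myRun_succ, ncsbNext_pos hcond])
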